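/- arXiv:1112.1564 — 2 statements merged into one kernel-verified Lean document; each statement's English description precedes it below -/
import Mathlib

section
/- Let B = (b_1, …, b_n) be a 3/4-LLL reduced basis and let v_1, v_2 ∈ L(B) be vectors with ‖v_1‖ = ‖v_2‖ = λ1(L(B)) and v_1 ≠ ±v_2, and let v_1', v_2' ∈ L(B') be the corresponding vectors in the lifted lattice. Then |‖v_1'‖² − ‖v_2'‖²| ≥ 2^{-4n²}. -/
noncomputable section

/-- The lattice generated by the vectors `B i`: all integer linear combinations. -/
def latticeOf {m n : ℕ} (B : Fin n → EuclideanSpace ℝ (Fin m)) :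
    Set (EuclideanSpace ℝ (Fin m)) :=
  {v | ∃ x : Fin n → ℤ, v = ∑ i, (x i : ℝ) • B i}

/-- `λ₁ L`: the minimum Euclidean norm of a nonzero vector of `L`. -/
def lambda1 {m : ℕ} (L : Set (EuclideanSpace ℝ (Fin m))) : ℝ :=
  sInf {r | ∃ v ∈ L, v ≠ 0 ∧ ‖v‖ = r}

/-- `λ₂ L`: the smallest `r` such that `L` contains two linearly independent
vectors of norm at most `r`. -/
def lambda2 {m : ℕ} (L : Set (EuclideanSpace ℝ (Fin m))) : ℝ :=
  sInf {r | ∃ v ∈ L, ∃ w ∈ L, LinearIndependent ℝ ![v, w] ∧ ‖v‖ ≤ r ∧ ‖w‖ ≤ r}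

instance (n : ℕ) : WellFoundedLT (Fin n) := inferInstance

/-- The Gram–Schmidt coefficient `μ i j = ⟨b i, b̃ j⟩ / ⟨b̃ j, b̃ j⟩`. -/
def mu {m n : ℕ} (B : Fin n → EuclideanSpace ℝ (Fin m)) (i j : Fin n) : ℝ :=
  (inner ℝ (B i) (InnerProductSpace.gramSchmidt ℝ B j) : ℝ) /
    (inner ℝ (InnerProductSpace.gramSchmidt ℝ B j) (InnerProductSpace.gramSchmidt ℝ B j) : ℝ)

/-- `B` is a 3/4-LLL reduced basis. -/
def LLLReduced {m n : ℕ} (B : Fin n → EuclideanSpace ℝ (Fin m)) : Prop :=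
  (∀ i j : Fin n, j < i → |mu B i j| ≤ 1 / 2) ∧
  (∀ i : Fin n, ∀ h : (i : ℕ) + 1 < n,
    (3 / 4 : ℝ) * ‖InnerProductSpace.gramSchmidt ℝ B i‖ ^ 2 ≤
      ‖mu B ⟨(i : ℕ) + 1, h⟩ i • InnerProductSpace.gramSchmidt ℝ B i + InnerProductSpace.gramSchmidt ℝ B ⟨(i : ℕ) + 1, h⟩‖ ^ 2)

/-- The lifted basis `B'` in `ℝ^(m+n)`: `b'ᵢ` agrees with `bᵢ` on the first `m`
coordinates, has `2^(2(i-1)n)/2^(2n²)` in coordinate `m+i` and `0` elsewhere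
(here `i : Fin n` is the zero-based index, corresponding to `i-1` in one-based notation). -/
def lifted {m n : ℕ} (B : Fin n → EuclideanSpace ℝ (Fin m)) :
    Fin n → EuclideanSpace ℝ (Fin (m + n)) :=
  fun i => (EuclideanSpace.equiv (Fin (m + n)) ℝ).symm
    (fun j => if h : (j : ℕ) < m then B i ⟨j, h⟩
      else if (j : ℕ) = m + (i : ℕ) then (2 : ℝ) ^ (2 * (i : ℕ) * n) / 2 ^ (2 * n ^ 2) else 0)


open InnerProductSpace

section Aux

lemma digits_zero' : ∀ (n : ℕ) (M : ℤ) (c : Fin n → ℤ), (∀ i, |c i| < M) →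
    (∑ i, c i * M ^ (i : ℕ)) = 0 → ∀ i, c i = 0 := by
  intro n
  induction n with
  | zero => intro M c _ _ i; exact absurd i.2 (by simp)
  | succ n ih =>
    intro M c hc hsum i
    have hM : 0 < M := lt_of_le_of_lt (abs_nonneg _) (hc 0)
    rw [Fin.sum_univ_succ] at hsum
    have h2 : ∑ j : Fin n, c j.succ * M ^ (j.succ : ℕ) =
        M * ∑ j : Fin n, c j.succ * M ^ (j : ℕ) := by
      rw [Finset.mul_sum]
      congr 1; ext j
      simp [Fin.val_succ, pow_succ]
      ring
    rw [h2] at hsum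
    have hc0 : c 0 = 0 := by
      have hdvd : M ∣ c 0 := ⟨-∑ j : Fin n, c j.succ * M ^ (j : ℕ), by simp at hsum ⊢; linarith⟩
      exact Int.eq_zero_of_abs_lt_dvd hdvd (hc 0)
    have hrest : ∑ j : Fin n, c j.succ * M ^ (j : ℕ) = 0 := by
      have := hsum
      rw [hc0] at this
      simpa [hM.ne'] using this
    have := ih M (fun j => c j.succ) (fun j => hc j.succ) hrest
    rcases Fin.eq_zero_or_eq_succ i with h | ⟨j, rfl⟩
    · rw [h]; exact hc0
    · exact this j

lemma norm_sq_eucl {k : ℕ} (v : EuclideanSpace ℝ (Fin k)) : ‖v‖^2 = ∑ j, (v j)^2 := by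
  rw [EuclideanSpace.norm_eq, Real.sq_sqrt (by positivity)]
  simp [sq_abs]

lemma lifted_apply_lt {m n : ℕ} (B : Fin n → EuclideanSpace ℝ (Fin m)) (i : Fin n) (j : Fin m) :
    lifted B i (Fin.castAdd n j) = B i j := by
  simp [lifted, EuclideanSpace.equiv, Fin.castAdd, j.2]

lemma lifted_apply_ge {m n : ℕ} (B : Fin n → EuclideanSpace ℝ (Fin m)) (i : Fin n) (k : Fin n) :
    lifted B i (Fin.natAdd m k) = if (k : Fin n) = i then (2 : ℝ) ^ (2 * (i : ℕ) * n) / 2 ^ (2 * n ^ 2) else 0 := by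
  have h1 : ¬ (((Fin.natAdd m k : Fin (m+n)) :ℕ) < m) := by simp
  rw [show lifted B i (Fin.natAdd m k) = if h : ((Fin.natAdd m k : Fin (m+n)):ℕ) < m then B i ⟨_, h⟩ else if ((Fin.natAdd m k : Fin (m+n)):ℕ) = m + (i : ℕ) then (2 : ℝ) ^ (2 * (i : ℕ) * n) / 2 ^ (2 * n ^ 2) else 0 from rfl]
  rw [dif_neg h1]
  by_cases h : k = i
  · subst h; simp
  · rw [if_neg, if_neg h]
    intro hc
    simp only [Fin.natAdd, Fin.val_mk] at hc
    exact h (Fin.ext (by omega))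

lemma lifted_norm_sq {m n : ℕ} (B : Fin n → EuclideanSpace ℝ (Fin m)) (x : Fin n → ℤ) :
    ‖∑ i, (x i : ℝ) • lifted B i‖^2 = ‖∑ i, (x i : ℝ) • B i‖^2 +
      ∑ i, (x i : ℝ)^2 * ((2 : ℝ) ^ (2 * (i : ℕ) * n) / 2 ^ (2 * n ^ 2))^2 := by
  rw [norm_sq_eucl, norm_sq_eucl]
  rw [Fin.sum_univ_add]
  congr 1
  · apply Finset.sum_congr rfl
    intro j _
    congr 1
    have : (∑ i, (x i : ℝ) • lifted B i) (Fin.castAdd n j) = (∑ i, (x i : ℝ) • B i) j := by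
      rw [WithLp.ofLp_sum, WithLp.ofLp_sum, Finset.sum_apply, Finset.sum_apply]
      exact Finset.sum_congr rfl fun i _ => by simp [lifted_apply_lt]
    rw [this]
  · apply Finset.sum_congr rfl
    intro k _
    rw [WithLp.ofLp_sum, Finset.sum_apply]
    have : ∀ i ∈ Finset.univ, ((x i : ℝ) • lifted B i) (Fin.natAdd m k) =
        if i = k then (x i : ℝ) * ((2 : ℝ) ^ (2 * (i : ℕ) * n) / 2 ^ (2 * n ^ 2)) else 0 := by
      intro i _
      simp only [PiLp.smul_apply, smul_eq_mul, lifted_apply_ge]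
      by_cases h : i = k
      · subst h; simp
      · rw [if_neg (fun hc => h hc.symm), if_neg h, mul_zero]
    rw [Finset.sum_congr rfl this, Finset.sum_ite_eq' Finset.univ k
      (fun i => (x i : ℝ) * ((2 : ℝ) ^ (2 * (i : ℕ) * n) / 2 ^ (2 * n ^ 2)))]
    simp [mul_pow]

lemma lambda1_le' {m n : ℕ} (B : Fin n → EuclideanSpace ℝ (Fin m))
    {w : EuclideanSpace ℝ (Fin m)} (hw : w ∈ latticeOf B) (hw0 : w ≠ 0) :
    lambda1 (latticeOf B) ≤ ‖w‖ := by
  apply csInf_le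
  · exact ⟨0, fun r ⟨v, _, _, hv⟩ => hv ▸ norm_nonneg v⟩
  · exact ⟨w, hw, hw0, rfl⟩

lemma parity_contra {m n : ℕ} (B : Fin n → EuclideanSpace ℝ (Fin m))
    (α β : Fin n → ℤ)
    (h₁ : ‖∑ i, (α i : ℝ) • B i‖ = lambda1 (latticeOf B))
    (h₂ : ‖∑ i, (β i : ℝ) • B i‖ = lambda1 (latticeOf B))
    (hne : (∑ i, (α i : ℝ) • B i) ≠ ∑ i, (β i : ℝ) • B i)
    (hne' : (∑ i, (α i : ℝ) • B i) ≠ -∑ i, (β i : ℝ) • B i)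
    (hsq : ∀ i, (α i)^2 = (β i)^2) : False := by
  set v₁ := ∑ i, (α i : ℝ) • B i with hv₁
  set v₂ := ∑ i, (β i : ℝ) • B i with hv₂
  set lam := lambda1 (latticeOf B) with hlam
  have habs : ∀ i, α i = β i ∨ α i = -β i := by
    intro i
    rcases sq_eq_sq_iff_eq_or_eq_neg.mp (hsq i) with h | h
    · exact Or.inl h
    · exact Or.inr h
  have key : ∀ (s : ℤ), (∀ i, ∃ g : ℤ, α i + s * β i = 2 * g) →
      (v₁ + (s:ℝ) • v₂ ≠ 0) → 2 * lam ≤ ‖v₁ + (s:ℝ) • v₂‖ := by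
    intro s hs hne0
    choose γ hγ using hs
    have hrep : v₁ + (s:ℝ) • v₂ = (2:ℝ) • ∑ i, (γ i : ℝ) • B i := by
      rw [hv₁, hv₂, Finset.smul_sum, Finset.smul_sum, ← Finset.sum_add_distrib]
      apply Finset.sum_congr rfl
      intro i _
      rw [smul_smul, ← add_smul, smul_smul]
      congr 1
      have h2 : ((α i : ℝ) + (s:ℝ) * (β i:ℝ)) = 2 * (γ i:ℝ) := by
        exact_mod_cast congrArg (Int.cast : ℤ → ℝ) (hγ i)
      linarith
    have hmem : (∑ i, (γ i : ℝ) • B i) ∈ latticeOf B := ⟨γ, rfl⟩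
    have hnz : (∑ i, (γ i : ℝ) • B i) ≠ 0 := by
      intro h
      rw [h, smul_zero] at hrep
      exact hne0 hrep
    have := lambda1_le' B hmem hnz
    rw [hrep, norm_smul]
    simp only [Real.norm_ofNat]
    linarith
  have hd : ∀ i, ∃ g : ℤ, α i + (-1) * β i = 2 * g := by
    intro i
    rcases habs i with h | h
    · exact ⟨0, by omega⟩
    · exact ⟨-β i, by omega⟩
  have hsm : ∀ i, ∃ g : ℤ, α i + 1 * β i = 2 * g := by
    intro i
    rcases habs i with h | h
    · exact ⟨β i, by omega⟩
    · exact ⟨0, by omega⟩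
  have hne0d : v₁ + ((-1:ℤ):ℝ) • v₂ ≠ 0 := by
    intro h
    apply hne
    have h2 : v₁ - v₂ = 0 := by
      rw [← h]; push_cast; module
    exact sub_eq_zero.mp h2
  have hne0s : v₁ + ((1:ℤ):ℝ) • v₂ ≠ 0 := by
    intro h
    apply hne'
    have h2 : v₁ + v₂ = 0 := by
      rw [← h]; push_cast; module
    exact eq_neg_of_add_eq_zero_left h2
  have hkd := key (-1) hd hne0d
  have hks := key 1 hsm hne0s
  have hpar : ‖v₁ + v₂‖^2 + ‖v₁ - v₂‖^2 = 2*lam^2 + 2*lam^2 := by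
    have := parallelogram_law_with_norm_mul ℝ v₁ v₂
    rw [h₁, h₂] at this
    calc ‖v₁ + v₂‖^2 + ‖v₁ - v₂‖^2 = ‖v₁ + v₂‖ * ‖v₁ + v₂‖ + ‖v₁ - v₂‖ * ‖v₁ - v₂‖ := by ring
    _ = 2 * (lam * lam + lam * lam) := this
    _ = 2*lam^2 + 2*lam^2 := by ring
  have e1 : v₁ + ((-1:ℤ):ℝ) • v₂ = v₁ - v₂ := by push_cast; module
  have e2 : v₁ + ((1:ℤ):ℝ) • v₂ = v₁ + v₂ := by push_cast; module
  rw [e1] at hkd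
  rw [e2] at hks
  have hlam0 : 0 ≤ lam := h₁ ▸ norm_nonneg v₁
  have hsq1 : (2*lam)^2 ≤ ‖v₁ - v₂‖^2 := by
    apply sq_le_sq' <;> nlinarith [norm_nonneg (v₁ - v₂)]
  have hsq2 : (2*lam)^2 ≤ ‖v₁ + v₂‖^2 := by
    apply sq_le_sq' <;> nlinarith [norm_nonneg (v₁ + v₂)]
  have hlamz : lam = 0 := by nlinarith
  apply hne
  have hz1 : v₁ = 0 := norm_eq_zero.mp (by rw [h₁, hlamz])
  have hz2 : v₂ = 0 := norm_eq_zero.mp (by rw [h₂, hlamz])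
  rw [hz1, hz2]

variable {m n : ℕ} (B : Fin n → EuclideanSpace ℝ (Fin m))

lemma inner_g_self_eq (j : Fin n) :
    (inner ℝ (gramSchmidt ℝ B j) (B j) : ℝ) = ‖gramSchmidt ℝ B j‖^2 := by
  nth_rewrite 1 [gramSchmidt_def'' ℝ B j]
  rw [inner_add_right, inner_sum]
  simp only [real_inner_smul_right]
  rw [Finset.sum_eq_zero fun i hi => by
    rw [gramSchmidt_orthogonal ℝ B (Finset.mem_Iio.mp hi).ne', mul_zero]]
  rw [add_zero, real_inner_self_eq_norm_sq]

lemma mu_self (j : Fin n) (hg : gramSchmidt ℝ B j ≠ 0) : mu B j j = 1 := by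
  have h := inner_g_self_eq B j
  rw [real_inner_comm] at h
  rw [mu, h, real_inner_self_eq_norm_sq, div_self]
  exact pow_ne_zero 2 (norm_ne_zero_iff.mpr hg)

lemma inner_g_B_of_gt {i j : Fin n} (hg : gramSchmidt ℝ B j ≠ 0) :
    (inner ℝ (gramSchmidt ℝ B j) (B i) : ℝ) = mu B i j * ‖gramSchmidt ℝ B j‖^2 := by
  rw [mu, real_inner_self_eq_norm_sq, div_mul_cancel₀, real_inner_comm]
  rw [← real_inner_self_eq_norm_sq]
  exact inner_self_ne_zero.mpr hg

lemma inner_g_sum (hg : ∀ j, gramSchmidt ℝ B j ≠ 0) (α : Fin n → ℤ) (j : Fin n) :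
    (inner ℝ (gramSchmidt ℝ B j) (∑ i, (α i : ℝ) • B i) : ℝ)
      = ((α j : ℝ) + ∑ i ∈ Finset.Ioi j, (α i : ℝ) * mu B i j) * ‖gramSchmidt ℝ B j‖^2 := by
  rw [inner_sum]
  have hterm : ∀ i : Fin n, (inner ℝ (gramSchmidt ℝ B j) ((α i : ℝ) • B i) : ℝ)
      = if j ≤ i then (α i : ℝ) * mu B i j * ‖gramSchmidt ℝ B j‖^2 else 0 := by
    intro i
    rw [real_inner_smul_right]
    rcases lt_trichotomy i j with h | h | h
    · rw [if_neg (not_le.mpr h), gramSchmidt_inv_triangular ℝ B h, mul_zero]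
    · subst h
      rw [if_pos le_rfl, inner_g_self_eq]
      rw [mu_self B i (hg i)]; ring
    · rw [if_pos h.le, inner_g_B_of_gt B (hg j), mul_assoc]
  rw [Finset.sum_congr rfl (fun i _ => hterm i)]
  rw [Finset.sum_ite, Finset.sum_const_zero, add_zero]
  have hfilter : Finset.univ.filter (fun i => j ≤ i) = insert j (Finset.Ioi j) := by
    ext i
    simp [Finset.mem_Ioi, le_iff_lt_or_eq, or_comm, eq_comm]
  rw [hfilter, Finset.sum_insert (by simp), add_mul, Finset.sum_mul]
  rw [mu_self B j (hg j)]
  rw [Finset.sum_congr rfl (fun x _ => by ring :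
    ∀ x ∈ Finset.Ioi j, (α x : ℝ) * mu B x j * ‖gramSchmidt ℝ B j‖ ^ 2
      = (α x : ℝ) * mu B x j * ‖gramSchmidt ℝ B j‖ ^ 2)]
  ring_nf

lemma gs_decay (hLLL : LLLReduced B) (t : ℕ) (h : t + 1 < n) :
    ‖gramSchmidt ℝ B ⟨t, Nat.lt_of_succ_lt h⟩‖^2 ≤ 2 * ‖gramSchmidt ℝ B ⟨t+1, h⟩‖^2 := by
  set i : Fin n := ⟨t, Nat.lt_of_succ_lt h⟩ with hi
  set i' : Fin n := ⟨t+1, h⟩ with hi'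
  have h34 := hLLL.2 i h
  have hmu : |mu B i' i| ≤ 1/2 := hLLL.1 i' i (by simp [hi, hi', Fin.lt_def])
  have horth : (inner ℝ (mu B i' i • gramSchmidt ℝ B i) (gramSchmidt ℝ B i') : ℝ) = 0 := by
    rw [real_inner_smul_left, gramSchmidt_orthogonal ℝ B (by simp [hi, hi', Fin.ext_iff]), mul_zero]
  have hexp : ‖mu B i' i • gramSchmidt ℝ B i + gramSchmidt ℝ B i'‖ ^ 2
      = (mu B i' i)^2 * ‖gramSchmidt ℝ B i‖^2 + ‖gramSchmidt ℝ B i'‖^2 := by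
    rw [norm_add_sq_real, horth, norm_smul]
    simp only [Real.norm_eq_abs, mul_pow, sq_abs]
    ring
  rw [hexp] at h34
  have hmusq : (mu B i' i)^2 ≤ 1/4 := by nlinarith [abs_nonneg (mu B i' i), sq_abs (mu B i' i)]
  nlinarith [sq_nonneg ‖gramSchmidt ℝ B i‖]

lemma gs_chain (hLLL : LLLReduced B) (hn : 0 < n) :
    ∀ (t : ℕ) (h : t < n), ‖gramSchmidt ℝ B ⟨0, hn⟩‖^2 ≤ 2^t * ‖gramSchmidt ℝ B ⟨t, h⟩‖^2 := by
  intro t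
  induction t with
  | zero => intro h; simp
  | succ t ih =>
    intro h
    have h1 := ih (Nat.lt_of_succ_lt h)
    have h2 := gs_decay B hLLL t h
    have : (0:ℝ) < 2^t := by positivity
    calc ‖gramSchmidt ℝ B ⟨0, hn⟩‖^2 ≤ 2^t * ‖gramSchmidt ℝ B ⟨t, Nat.lt_of_succ_lt h⟩‖^2 := h1
    _ ≤ 2^t * (2 * ‖gramSchmidt ℝ B ⟨t+1, h⟩‖^2) := by nlinarith
    _ = 2^(t+1) * ‖gramSchmidt ℝ B ⟨t+1, h⟩‖^2 := by ring

lemma basis_mem_lattice (k : Fin n) : B k ∈ latticeOf B := by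
  refine ⟨fun i => if i = k then 1 else 0, ?_⟩
  have h : ∀ i ∈ Finset.univ, (((if i = k then 1 else 0 : ℤ)):ℝ) • B i
      = if i = k then B i else 0 := by
    intro i _
    split_ifs with h <;> simp
  rw [Finset.sum_congr rfl h, Finset.sum_ite_eq' Finset.univ k B, if_pos (Finset.mem_univ k)]

lemma g_zero (hn : 0 < n) : gramSchmidt ℝ B ⟨0, hn⟩ = B ⟨0, hn⟩ := by
  rw [gramSchmidt_def]
  have : Finset.Iio (⟨0, hn⟩ : Fin n) = ∅ := by
    ext i; simp [Fin.lt_def]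
  rw [this, Finset.sum_empty, sub_zero]

lemma cj_bound (hB : LinearIndependent ℝ B) (hLLL : LLLReduced B) (hn : 0 < n)
    (α : Fin n → ℤ) (h₁ : ‖∑ i, (α i : ℝ) • B i‖ = lambda1 (latticeOf B)) (j : Fin n) :
    |(α j : ℝ) + ∑ i ∈ Finset.Ioi j, (α i : ℝ) * mu B i j| ≤ 2^(n-1) := by
  have hg : ∀ j, gramSchmidt ℝ B j ≠ 0 := fun j => gramSchmidt_ne_zero j hB
  set v := ∑ i, (α i : ℝ) • B i with hv
  set c := (α j : ℝ) + ∑ i ∈ Finset.Ioi j, (α i : ℝ) * mu B i j with hc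
  have hCS := abs_real_inner_le_norm (gramSchmidt ℝ B j) v
  rw [inner_g_sum B hg α j, ← hc] at hCS
  have hgj : (0:ℝ) < ‖gramSchmidt ℝ B j‖ := norm_pos_iff.mpr (hg j)
  -- ‖v‖ ≤ ‖g 0‖
  have hB0 : B ⟨0, hn⟩ ≠ 0 := hB.ne_zero ⟨0, hn⟩
  have hvle : ‖v‖ ≤ ‖gramSchmidt ℝ B ⟨0, hn⟩‖ := by
    rw [g_zero B hn, h₁]
    exact lambda1_le' B (basis_mem_lattice B ⟨0, hn⟩) hB0
  have hchain := gs_chain B hLLL hn (j : ℕ) j.2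
  have hj_eq : (⟨(j:ℕ), j.2⟩ : Fin n) = j := Fin.ext rfl
  rw [hj_eq] at hchain
  -- |c| * ‖g j‖^2 ≤ ‖g j‖ * ‖v‖
  rw [abs_mul, abs_of_nonneg (by positivity : (0:ℝ) ≤ ‖gramSchmidt ℝ B j‖^2)] at hCS
  have h1 : |c| ≤ ‖v‖ / ‖gramSchmidt ℝ B j‖ := by
    rw [le_div_iff₀ hgj]
    nlinarith
  have h2 : c^2 ≤ 2^(j:ℕ) := by
    have : |c|^2 ≤ (‖v‖ / ‖gramSchmidt ℝ B j‖)^2 := by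
      apply pow_le_pow_left₀ (abs_nonneg c) h1
    rw [sq_abs, div_pow, le_div_iff₀ (by positivity)] at this
    nlinarith [norm_nonneg v, pow_pos hgj 2]
  have h3 : c^2 ≤ 2^(n-1) := le_trans h2 (by
    apply pow_le_pow_right₀ (by norm_num)
    omega)
  have h4 : (1:ℝ) ≤ 2^(n-1) := by
    calc (1:ℝ) = 1^(n-1) := (one_pow _).symm
    _ ≤ 2^(n-1) := pow_le_pow_left₀ (by norm_num) (by norm_num) _
  nlinarith [abs_nonneg c, sq_abs c]

lemma alpha_step (hB : LinearIndependent ℝ B) (hLLL : LLLReduced B) (hn : 0 < n)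
    (α : Fin n → ℤ) (h₁ : ‖∑ i, (α i : ℝ) • B i‖ = lambda1 (latticeOf B)) (j : Fin n) :
    |(α j : ℝ)| ≤ 2^(n-1) + (1/2) * ∑ i ∈ Finset.Ioi j, |(α i : ℝ)| := by
  have hc := cj_bound B hB hLLL hn α h₁ j
  set T := ∑ i ∈ Finset.Ioi j, (α i : ℝ) * mu B i j with hT
  have hTb : |T| ≤ (1/2) * ∑ i ∈ Finset.Ioi j, |(α i : ℝ)| := by
    calc |T| ≤ ∑ i ∈ Finset.Ioi j, |(α i : ℝ) * mu B i j| := Finset.abs_sum_le_sum_abs _ _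
    _ ≤ ∑ i ∈ Finset.Ioi j, |(α i : ℝ)| * (1/2) := by
        apply Finset.sum_le_sum
        intro i hi
        rw [abs_mul]
        exact mul_le_mul_of_nonneg_left (hLLL.1 i j (Finset.mem_Ioi.mp hi)) (abs_nonneg _)
    _ = (1/2) * ∑ i ∈ Finset.Ioi j, |(α i : ℝ)| := by rw [← Finset.sum_mul]; ring
  calc |(α j : ℝ)| = |((α j : ℝ) + T) - T| := by ring_nf
  _ ≤ |(α j : ℝ) + T| + |T| := abs_sub _ _
  _ ≤ 2^(n-1) + (1/2) * ∑ i ∈ Finset.Ioi j, |(α i : ℝ)| := add_le_add hc hTb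

lemma Ioi_last (j : Fin n) (hj : (j : ℕ) + 1 = n) : Finset.Ioi j = ∅ := by
  ext i
  simp only [Finset.mem_Ioi, Finset.notMem_empty, iff_false, not_lt, Fin.le_def]
  omega

lemma Ioi_succ_eq (j : Fin n) (hj : (j : ℕ) + 1 < n) :
    Finset.Ioi j = insert (⟨(j:ℕ)+1, hj⟩ : Fin n) (Finset.Ioi (⟨(j:ℕ)+1, hj⟩ : Fin n)) := by
  ext i
  simp only [Finset.mem_Ioi, Finset.mem_insert, Fin.lt_def, Fin.ext_iff]
  omega

lemma sum_rec (hB : LinearIndependent ℝ B) (hLLL : LLLReduced B) (hn : 0 < n)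
    (α : Fin n → ℤ) (h₁ : ‖∑ i, (α i : ℝ) • B i‖ = lambda1 (latticeOf B)) :
    ∀ (t : ℕ) (j : Fin n), n - 1 - (j:ℕ) ≤ t →
      ∑ i ∈ Finset.Ioi j, |(α i : ℝ)| ≤ 2^(n-1) * (2 * (3/2)^(n-1-(j:ℕ)) - 2) := by
  have hK : (0:ℝ) ≤ 2^(n-1) := by positivity
  intro t
  induction t with
  | zero =>
    intro j hj
    have hj' : (j:ℕ) + 1 = n := by omega
    rw [Ioi_last j hj', Finset.sum_empty]
    have : n - 1 - (j:ℕ) = 0 := by omega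
    rw [this]
    norm_num
  | succ t ih =>
    intro j hj
    by_cases hlast : (j:ℕ) + 1 = n
    · rw [Ioi_last j hlast, Finset.sum_empty]
      have : n - 1 - (j:ℕ) = 0 := by omega
      rw [this]; norm_num
    · have hjn : (j:ℕ) + 1 < n := by omega
      set j' : Fin n := ⟨(j:ℕ)+1, hjn⟩ with hj'
      have hrw := Ioi_succ_eq j hjn
      rw [hrw, Finset.sum_insert (by simp)]
      have hstep := alpha_step B hB hLLL hn α h₁ j'
      have hih : ∑ i ∈ Finset.Ioi j', |(α i : ℝ)| ≤ 2^(n-1) * (2 * (3/2)^(n-1-((j':Fin n):ℕ)) - 2) :=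
        ih j' (by simp [hj']; omega)
      have he : n - 1 - ((j':Fin n):ℕ) = n - 2 - (j:ℕ) := by simp [hj']; omega
      have he2 : n - 1 - (j:ℕ) = (n - 2 - (j:ℕ)) + 1 := by omega
      rw [he] at hih
      rw [he2, pow_succ]
      set e := n - 2 - (j:ℕ)
      set S := ∑ i ∈ Finset.Ioi j', |(α i : ℝ)|
      have hP : (0:ℝ) ≤ (3/2)^e := by positivity
      nlinarith [hih, hstep]

lemma coeff_bound (hB : LinearIndependent ℝ B) (hLLL : LLLReduced B) (hn : 0 < n)
    (α : Fin n → ℤ) (h₁ : ‖∑ i, (α i : ℝ) • B i‖ = lambda1 (latticeOf B)) (j : Fin n) :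
    |(α j : ℝ)| ≤ 2^(2*(n-1)) := by
  have hK : (0:ℝ) ≤ 2^(n-1) := by positivity
  have hstep := alpha_step B hB hLLL hn α h₁ j
  have hrec := sum_rec B hB hLLL hn α h₁ (n - 1 - (j:ℕ)) j le_rfl
  have h1 : |(α j : ℝ)| ≤ 2^(n-1) * (3/2)^(n-1-(j:ℕ)) := by nlinarith
  have h2 : ((3:ℝ)/2)^(n-1-(j:ℕ)) ≤ (3/2)^(n-1) :=
    pow_le_pow_right₀ (by norm_num) (by omega)
  have h3 : ((3:ℝ)/2)^(n-1) ≤ 2^(n-1) := pow_le_pow_left₀ (by norm_num) (by norm_num) _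
  calc |(α j : ℝ)| ≤ 2^(n-1) * (3/2)^(n-1-(j:ℕ)) := h1
  _ ≤ 2^(n-1) * 2^(n-1) := by nlinarith
  _ = 2^(2*(n-1)) := by rw [← pow_add]; ring_nf


end Aux

/-- For a 3/4-LLL reduced basis `B`, if `v₁ = ∑ αᵢ bᵢ` and `v₂ = ∑ βᵢ bᵢ`
are both shortest nonzero lattice vectors with `v₁ ≠ ±v₂`, then the corresponding
lifted vectors satisfy `|‖v₁'‖² - ‖v₂'‖²| ≥ 2^{-4n²}`. -/
theorem stmt2 {m n : ℕ} (B : Fin n → EuclideanSpace ℝ (Fin m))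
    (hB : LinearIndependent ℝ B) (hLLL : LLLReduced B)
    (α β : Fin n → ℤ)
    (h₁ : ‖∑ i, (α i : ℝ) • B i‖ = lambda1 (latticeOf B))
    (h₂ : ‖∑ i, (β i : ℝ) • B i‖ = lambda1 (latticeOf B))
    (hne : (∑ i, (α i : ℝ) • B i) ≠ ∑ i, (β i : ℝ) • B i)
    (hne' : (∑ i, (α i : ℝ) • B i) ≠ -∑ i, (β i : ℝ) • B i) :
    ((2 : ℝ) ^ (4 * n ^ 2))⁻¹ ≤
      |‖∑ i, (α i : ℝ) • lifted B i‖ ^ 2 - ‖∑ i, (β i : ℝ) • lifted B i‖ ^ 2| := by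
  by_cases hn0 : n = 0
  · subst hn0
    simp only [Finset.univ_eq_empty, Finset.sum_empty] at hne
    exact absurd rfl hne
  have hn : 0 < n := Nat.pos_of_ne_zero hn0
  have hαb := coeff_bound B hB hLLL hn α h₁
  have hβb := coeff_bound B hB hLLL hn β h₂
  set S : ℤ := ∑ i, ((α i)^2 - (β i)^2) * ((2:ℤ)^(4*n))^(i:ℕ) with hS
  have hSne : S ≠ 0 := by
    intro hS0
    have hM : ∀ i : Fin n, |(α i)^2 - (β i)^2| < (2:ℤ)^(4*n) := by
      intro i
      have hα : |α i| ≤ (2:ℤ)^(2*(n-1)) := by exact_mod_cast hαb i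
      have hβ : |β i| ≤ (2:ℤ)^(2*(n-1)) := by exact_mod_cast hβb i
      have hA : (α i)^2 ≤ (2:ℤ)^(4*(n-1)) := by
        calc (α i)^2 = |α i|^2 := (sq_abs _).symm
        _ ≤ ((2:ℤ)^(2*(n-1)))^2 := pow_le_pow_left₀ (abs_nonneg _) hα 2
        _ = (2:ℤ)^(4*(n-1)) := by rw [← pow_mul]; congr 1; omega
      have hBq : (β i)^2 ≤ (2:ℤ)^(4*(n-1)) := by
        calc (β i)^2 = |β i|^2 := (sq_abs _).symm
        _ ≤ ((2:ℤ)^(2*(n-1)))^2 := pow_le_pow_left₀ (abs_nonneg _) hβ 2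
        _ = (2:ℤ)^(4*(n-1)) := by rw [← pow_mul]; congr 1; omega
      have hlt : (2:ℤ)^(4*(n-1)) < 2^(4*n) :=
        pow_lt_pow_right₀ (by norm_num) (by omega)
      rw [abs_lt]
      constructor <;> nlinarith [sq_nonneg (α i), sq_nonneg (β i)]
    have hzero := digits_zero' n ((2:ℤ)^(4*n)) (fun i => (α i)^2 - (β i)^2) hM hS0
    exact parity_contra B α β h₁ h₂ hne hne' (fun i => sub_eq_zero.mp (hzero i))
  have ht : ∀ i : Fin n, ((2:ℝ)^(2*(i:ℕ)*n) / 2^(2*n^2))^2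
      = ((2:ℝ)^(4*n))^(i:ℕ) / 2^(4*n^2) := by
    intro i
    rw [div_pow, ← pow_mul, ← pow_mul, ← pow_mul]
    congr 1 <;> ring
  have hsum : ∀ x : Fin n → ℤ, ∑ i, (x i:ℝ)^2 * ((2:ℝ)^(2*(i:ℕ)*n)/2^(2*n^2))^2
      = (∑ i, (x i:ℝ)^2 * ((2:ℝ)^(4*n))^(i:ℕ)) / 2^(4*n^2) := by
    intro x
    rw [Finset.sum_div]
    apply Finset.sum_congr rfl
    intro i _
    rw [ht i]
    ring
  have hd : ‖∑ i, (α i:ℝ) • lifted B i‖^2 - ‖∑ i, (β i:ℝ) • lifted B i‖^2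
      = (S:ℝ) / 2^(4*n^2) := by
    rw [lifted_norm_sq, lifted_norm_sq, h₁, h₂, hsum α, hsum β]
    have hcast : ((S:ℤ):ℝ) = ∑ i, ((α i:ℝ)^2 - (β i:ℝ)^2) * ((2:ℝ)^(4*n))^(i:ℕ) := by
      rw [hS]
      push_cast
      ring
    rw [hcast]
    rw [Finset.sum_congr rfl (fun i _ => by ring :
      ∀ i ∈ Finset.univ, ((α i:ℝ)^2 - (β i:ℝ)^2) * ((2:ℝ)^(4*n))^(i:ℕ)
        = (α i:ℝ)^2 * ((2:ℝ)^(4*n))^(i:ℕ) - (β i:ℝ)^2 * ((2:ℝ)^(4*n))^(i:ℕ))]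
    rw [Finset.sum_sub_distrib]
    ring
  rw [hd, abs_div, abs_of_pos (by positivity : (0:ℝ) < 2^(4*n^2)), inv_eq_one_div]
  gcongr
  exact_mod_cast Int.one_le_abs hSne


end
end

section
/- Let n ≥ 2, let B = (b_1, …, b_n) be a basis of ℝ^n with lattice L = L(B), and let S = (s_1, …, s_n) be a basis of a full-rank sublattice M = L(S) ⊆ L such that |det S| ≥ 2^t · |det B| for a real number t > n(n + log₂ n), where det denotes the determinant of the matrix whose columns are the basis vectors. Let u ∈ M be a vector with ‖u‖ = λ1(L), and let M* = {v ∈ ℝ^n : ⟨v, w⟩ ∈ ℤ for all w ∈ M} be the dual lattice of M. Then every v ∈ M* with ‖v‖ ≤ 2^n · √n · |det S|^{-1/n} satisfies ⟨u, v⟩ = 0. -/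
noncomputable section

/-- The matrix whose columns are the vectors `B 1, …, B n`. -/
def colMatrix {n : ℕ} (B : Fin n → EuclideanSpace ℝ (Fin n)) : Matrix (Fin n) (Fin n) ℝ :=
  Matrix.of fun i j => B j i

open Submodule MeasureTheory ZSpan

/-- The integer-combination lattice coincides with the `ℤ`-span. -/
lemma latticeOf_eq_span {n : ℕ} (B : Fin n → EuclideanSpace ℝ (Fin n)) :
    latticeOf B = ↑(span ℤ (Set.range B)) := by
  ext v
  simp only [latticeOf, Set.mem_setOf_eq, SetLike.mem_coe, mem_span_range_iff_exists_fun]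
  constructor
  · rintro ⟨x, rfl⟩
    exact ⟨x, by simp [Int.cast_smul_eq_zsmul]⟩
  · rintro ⟨x, rfl⟩
    exact ⟨x, by simp [Int.cast_smul_eq_zsmul]⟩

/-- Volume of the fundamental domain of a basis lattice is `|det|` of the column matrix. -/
lemma volume_fd {n : ℕ} (b : Module.Basis (Fin n) ℝ (EuclideanSpace ℝ (Fin n))) :
    volume (fundamentalDomain b) = ENNReal.ofReal |(colMatrix ⇑b).det| := by
  classical
  set b₀ := (EuclideanSpace.basisFun (Fin n) ℝ).toBasis with hb₀
  have h1 : volume (fundamentalDomain b₀) = 1 := by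
    have : fundamentalDomain b₀ = (MeasurableEquiv.toLp 2 (Fin n → ℝ)).symm ⁻¹'
        (Set.pi Set.univ fun _ => Set.Ico (0:ℝ) 1) := by
      ext x
      simp only [fundamentalDomain, Set.mem_setOf_eq, Set.mem_preimage, Set.mem_pi, Set.mem_univ,
        true_implies, Set.mem_Ico, hb₀]
      simp
    rw [this, (EuclideanSpace.volume_preserving_symm_measurableEquiv_toLp (Fin n)).measure_preimage
      (MeasurableSet.univ_pi fun _ => measurableSet_Ico).nullMeasurableSet, volume_pi_pi]
    simp
  rw [ZSpan.measure_fundamentalDomain b volume b₀, h1, mul_one]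
  congr 2

/-- Minkowski's theorem: a short nonzero vector in the lattice of a basis. -/
lemma exists_short_vec {n : ℕ} (hn : 0 < n) (b : Module.Basis (Fin n) ℝ (EuclideanSpace ℝ (Fin n)))
    (c : ℝ) (hc : 0 ≤ c)
    (hvol : ENNReal.ofReal |(colMatrix ⇑b).det| * 2 ^ n ≤ ENNReal.ofReal ((2*c)^n)) :
    ∃ x : EuclideanSpace ℝ (Fin n), x ∈ span ℤ (Set.range ⇑b) ∧ x ≠ 0 ∧
      ‖x‖ ≤ Real.sqrt n * c := by
  classical
  set E := EuclideanSpace ℝ (Fin n)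
  haveI : Nontrivial E := nontrivial_of_ne (b ⟨0, hn⟩) 0 (b.ne_zero _)
  set box : Set E := {x : E | ∀ i, |x i| ≤ c} with hbox
  have hboxeq : box = (MeasurableEquiv.toLp 2 (Fin n → ℝ)).symm ⁻¹'
      (Set.pi Set.univ fun _ => Set.Icc (-c) c) := by
    ext x
    simp only [hbox, Set.mem_setOf_eq, Set.mem_preimage, Set.mem_pi, Set.mem_univ, true_implies,
      Set.mem_Icc, abs_le]
    rfl
  have hvolbox : volume box = ENNReal.ofReal ((2*c)^n) := by
    rw [hboxeq, (EuclideanSpace.volume_preserving_symm_measurableEquiv_toLp (Fin n)).measure_preimage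
      (MeasurableSet.univ_pi fun _ => measurableSet_Icc).nullMeasurableSet, volume_pi_pi]
    simp only [Real.volume_Icc, sub_neg_eq_add, Finset.prod_const, Finset.card_univ,
      Fintype.card_fin]
    rw [← ENNReal.ofReal_pow (by linarith : (0:ℝ) ≤ c + c)]
    congr 1; ring
  have hsymm : ∀ x ∈ box, -x ∈ box := by
    intro x hx i
    rw [show (-x) i = -(x i) from rfl, abs_neg]
    exact hx i
  have hconv : Convex ℝ box := by
    intro x hx y hy a d ha hd had i
    calc |(a • x + d • y) i| = |a * x i + d * y i| := by
          rw [show (a • x + d • y) i = a * x i + d * y i from rfl]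
    _ ≤ |a * x i| + |d * y i| := abs_add_le _ _
    _ = a * |x i| + d * |y i| := by rw [abs_mul, abs_mul, abs_of_nonneg ha, abs_of_nonneg hd]
    _ ≤ a * c + d * c := by gcongr; exacts [hx i, hy i]
    _ = c := by rw [← add_mul, had, one_mul]
  have hcpt : IsCompact box := by
    have hK : IsCompact (Set.pi Set.univ fun _ : Fin n => Set.Icc (-c) c) :=
      isCompact_univ_pi fun _ => isCompact_Icc
    have heq : box = (PiLp.continuousLinearEquiv 2 ℝ (fun _ : Fin n => ℝ)).symm ''
        (Set.pi Set.univ fun _ => Set.Icc (-c) c) := by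
      rw [hboxeq]
      ext x
      simp
      refine ⟨fun h => ⟨x.ofLp, h, rfl⟩, ?_⟩
      rintro ⟨y, hy, rfl⟩
      exact hy
    rw [heq]
    exact hK.image (PiLp.continuousLinearEquiv 2 ℝ _).symm.continuous
  haveI : Countable (span ℤ (Set.range ⇑b)).toAddSubgroup := by
    change Countable (span ℤ (Set.range ⇑b))
    infer_instance
  have fund := ZSpan.isAddFundamentalDomain' b (volume : Measure E)
  obtain ⟨x, hx0, hxbox⟩ := exists_ne_zero_mem_lattice_of_measure_mul_two_pow_le_measure
    fund hsymm hconv hcpt (by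
      rw [volume_fd b, hvolbox, finrank_euclideanSpace_fin]
      exact hvol)
  refine ⟨x, x.2, ?_, ?_⟩
  · exact fun h => hx0 (Subtype.ext h)
  · have hnorm : ‖(x : E)‖ = Real.sqrt (∑ i, ((x : E) i)^2) := by
      rw [EuclideanSpace.norm_eq]
      congr 1
      exact Finset.sum_congr rfl fun i _ => by rw [Real.norm_eq_abs, sq_abs]
    rw [hnorm]
    have h1 : (∑ i, ((x : E) i)^2) ≤ (n : ℝ) * c^2 := by
      calc (∑ i, ((x : E) i)^2) ≤ ∑ _i : Fin n, c^2 := by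
            apply Finset.sum_le_sum
            intro i _
            calc ((x:E) i)^2 = |(x:E) i|^2 := (sq_abs _).symm
            _ ≤ c^2 := pow_le_pow_left₀ (abs_nonneg _) (hxbox i) 2
      _ = (n : ℝ) * c^2 := by
            rw [Finset.sum_const, Finset.card_univ, Fintype.card_fin, nsmul_eq_mul]
    calc Real.sqrt (∑ i, ((x : E) i)^2) ≤ Real.sqrt ((n:ℝ) * c^2) := Real.sqrt_le_sqrt h1
    _ = Real.sqrt n * c := by
          rw [Real.sqrt_mul (by positivity), Real.sqrt_sq hc]

theorem stmt11 {n : ℕ} (hn : 2 ≤ n) (B S : Fin n → EuclideanSpace ℝ (Fin n))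
    (hB : LinearIndependent ℝ B) (hS : LinearIndependent ℝ S)
    (hsub : latticeOf S ⊆ latticeOf B)
    (t : ℝ) (ht : (n : ℝ) * ((n : ℝ) + Real.logb 2 (n : ℝ)) < t)
    (hdet : (2 : ℝ) ^ t * |(colMatrix B).det| ≤ |(colMatrix S).det|)
    (u : EuclideanSpace ℝ (Fin n)) (huM : u ∈ latticeOf S)
    (hu : ‖u‖ = lambda1 (latticeOf B)) :
    ∀ v : EuclideanSpace ℝ (Fin n),
      (∀ w ∈ latticeOf S, ∃ z : ℤ, (inner ℝ v w : ℝ) = (z : ℝ)) →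
      ‖v‖ ≤ 2 ^ n * Real.sqrt n * |(colMatrix S).det| ^ (-(1 : ℝ) / n) →
      (inner ℝ u v : ℝ) = 0 := by
  classical
  intro v hv hnv
  have hn0 : 0 < n := by omega
  have hnR : (0:ℝ) < n := by exact_mod_cast hn0
  -- the basis
  have hcard : Fintype.card (Fin n) = Module.finrank ℝ (EuclideanSpace ℝ (Fin n)) := by
    simp [finrank_euclideanSpace_fin]
  haveI : Nonempty (Fin n) := ⟨⟨0, hn0⟩⟩
  set b : Module.Basis (Fin n) ℝ (EuclideanSpace ℝ (Fin n)) :=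
    basisOfLinearIndependentOfCardEqFinrank hB hcard with hbdef
  have hbcoe : ⇑b = B := coe_basisOfLinearIndependentOfCardEqFinrank hB hcard
  set D := |(colMatrix B).det| with hD
  set DS := |(colMatrix S).det| with hDS
  -- positivity of determinants
  have hDpos : 0 < D := by
    have hne := ZSpan.measure_fundamentalDomain_ne_zero b (μ := (volume : Measure _))
    rw [volume_fd b] at hne
    have : 0 < ENNReal.ofReal |(colMatrix ⇑b).det| := pos_iff_ne_zero.mpr hne
    rw [ENNReal.ofReal_pos, hbcoe] at this
    exact this
  have h2t : (0:ℝ) < (2:ℝ) ^ t := Real.rpow_pos_of_pos (by norm_num) t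
  have hDSpos : 0 < DS := lt_of_lt_of_le (by positivity) hdet
  -- Minkowski bound on λ₁ hence on ‖u‖
  set c := D ^ ((1:ℝ)/n) with hc
  have hcpos : 0 < c := Real.rpow_pos_of_pos hDpos _
  have hcn : c ^ n = D := by
    rw [hc, ← Real.rpow_natCast (D ^ ((1:ℝ)/n)) n, ← Real.rpow_mul hDpos.le,
      one_div_mul_cancel (by positivity : (n:ℝ) ≠ 0), Real.rpow_one]
  obtain ⟨x, hxmem, hx0, hxnorm⟩ := exists_short_vec hn0 b c hcpos.le (by
    rw [hbcoe]
    have : ((2:ℝ)*c)^n = D * 2^n := by rw [mul_pow, hcn]; ring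
    rw [this, ENNReal.ofReal_mul hDpos.le]
    gcongr
    rw [ENNReal.ofReal_pow (by norm_num : (0:ℝ) ≤ 2)]
    norm_num)
  have hxlat : x ∈ latticeOf B := by
    rw [latticeOf_eq_span B, ← hbcoe]
    exact hxmem
  have hul : ‖u‖ ≤ Real.sqrt n * c := by
    rw [hu]
    refine le_trans (csInf_le ⟨0, ?_⟩ ⟨x, hxlat, hx0, rfl⟩) hxnorm
    rintro r ⟨w, -, -, rfl⟩
    exact norm_nonneg w
  -- the inner product is an integer
  obtain ⟨z, hz⟩ := hv u huM
  have hiuv : (inner ℝ u v : ℝ) = (z : ℝ) := by rw [real_inner_comm]; exact hz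
  rw [hiuv]
  -- bound |z| < 1
  have hbound : |(z:ℝ)| < 1 := by
    have h1 : |(z:ℝ)| ≤ ‖u‖ * ‖v‖ := by
      rw [← hiuv]; exact abs_real_inner_le_norm u v
    have h2 : ‖u‖ * ‖v‖ ≤ (Real.sqrt n * c) * (2 ^ n * Real.sqrt n * DS ^ (-(1:ℝ)/n)) := by
      gcongr
    have key : (Real.sqrt n * c) * (2 ^ n * Real.sqrt n * DS ^ (-(1:ℝ)/n)) < 1 := by
      have hsq : Real.sqrt n * Real.sqrt n = (n:ℝ) := Real.mul_self_sqrt hnR.le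
      have hrw : (Real.sqrt n * c) * (2 ^ n * Real.sqrt n * DS ^ (-(1:ℝ)/n))
          = (n:ℝ) * 2 ^ n * (c * DS ^ (-(1:ℝ)/n)) := by
        rw [show (Real.sqrt n * c) * (2 ^ n * Real.sqrt n * DS ^ (-(1:ℝ)/n))
            = (Real.sqrt n * Real.sqrt n) * 2 ^ n * (c * DS ^ (-(1:ℝ)/n)) from by ring, hsq]
      rw [hrw]
      have hcd : c * DS ^ (-(1:ℝ)/n) = (D / DS) ^ ((1:ℝ)/n) := by
        rw [hc, neg_div, Real.rpow_neg hDSpos.le, Real.div_rpow hDpos.le hDSpos.le]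
        ring
      rw [hcd]
      have hdd : D / DS ≤ (2:ℝ) ^ (-t) := by
        rw [Real.rpow_neg (by norm_num : (0:ℝ) ≤ 2), div_le_iff₀ hDSpos]
        rw [inv_mul_eq_div, le_div_iff₀ h2t]
        linarith [hdet]
      have h3 : (D / DS) ^ ((1:ℝ)/n) ≤ (2:ℝ) ^ (-(t/n)) := by
        calc (D / DS) ^ ((1:ℝ)/n) ≤ ((2:ℝ) ^ (-t)) ^ ((1:ℝ)/n) :=
              Real.rpow_le_rpow (by positivity) hdd (by positivity)
        _ = (2:ℝ) ^ (-(t/n)) := by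
              rw [← Real.rpow_mul (by norm_num : (0:ℝ) ≤ 2)]
              congr 1
              field_simp
      have h4 : (n:ℝ) * 2 ^ n < (2:ℝ) ^ (t/n) := by
        have hlog : (n:ℝ) + Real.logb 2 n < t / n := by
          rw [lt_div_iff₀ hnR]
          calc ((n:ℝ) + Real.logb 2 n) * n = n * (n + Real.logb 2 n) := by ring
          _ < t := ht
        have : (n:ℝ) * 2 ^ n = (2:ℝ) ^ ((n:ℝ) + Real.logb 2 n) := by
          rw [Real.rpow_add (by norm_num : (0:ℝ) < 2), Real.rpow_natCast,
            Real.rpow_logb (by norm_num) (by norm_num) hnR]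
          ring
        rw [this]
        exact Real.rpow_lt_rpow_left_iff (by norm_num : (1:ℝ) < 2) |>.mpr hlog
      calc (n:ℝ) * 2 ^ n * (D / DS) ^ ((1:ℝ)/n) ≤ (n:ℝ) * 2 ^ n * (2:ℝ) ^ (-(t/n)) :=
            mul_le_mul_of_nonneg_left h3 (by positivity)
      _ < (2:ℝ) ^ (t/n) * (2:ℝ) ^ (-(t/n)) := by
            have := Real.rpow_pos_of_pos (show (0:ℝ) < 2 by norm_num) (-(t/n))
            exact mul_lt_mul_of_pos_right h4 this
      _ = 1 := by
            rw [← Real.rpow_add (by norm_num : (0:ℝ) < 2)]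
            simp
    linarith
  have : |z| < 1 := by exact_mod_cast hbound
  have : z = 0 := Int.abs_lt_one_iff.mp this
  simp [this]

end
end
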